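/- For positive integers r_1,...,r_s, the alternating sum over all choices l_t ∈ {0,1} of (-1)^{s - Σl_t} times the binomial coefficient C(Σ_t l_t r_t, s) equals the product r_1·r_2···r_s. -/

import Mathlib

open Polynomial Finset

/-- For positive integers `r 1, ..., r s` (`s ≥ 1`), the alternating sum over all choices
`l t ∈ {0,1}` of `(-1)^(s - Σ l t)` times `C(Σ_t (l t) * (r t), s)` equals `∏ t, r t`. -/
theorem alt_sum_choose_eq_prod (s : ℕ) (hs : 1 ≤ s) (r : Fin s → ℕ)
    (hr : ∀ t, 0 < r t) :
    ∑ l : Fin s → Bool,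
      (-1 : ℤ) ^ (s - ∑ t, (if l t then 1 else 0)) *
        (Nat.choose (∑ t, if l t then r t else 0) s : ℤ) = (∏ t, (r t : ℤ)) := by
  classical
  -- Step 1: expand the product ∏ ((X+1)^(r t) - 1) as a sum over l : Fin s → Bool
  have expand : (∏ t, ((X + 1 : ℤ[X]) ^ (r t) - 1))
      = ∑ l : Fin s → Bool,
          (-1 : ℤ[X]) ^ (s - ∑ t, (if l t then 1 else 0)) *
            (X + 1) ^ (∑ t, if l t then r t else 0) := by
    have h1 : (∏ t, ((X + 1 : ℤ[X]) ^ (r t) - 1))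
        = ∏ t, ∑ b : Bool, (if b then (X + 1 : ℤ[X]) ^ (r t) else -1) := by
      apply Finset.prod_congr rfl
      intro t _
      simp [Fintype.sum_bool]
      ring
    rw [h1, Finset.prod_univ_sum]
    rw [show (Fintype.piFinset fun _ : Fin s => (univ : Finset Bool)) = univ by
      ext; simp]
    apply Finset.sum_congr rfl
    intro l _
    have h2 : ∀ t : Fin s, (if l t then (X + 1 : ℤ[X]) ^ (r t) else -1)
        = (-1 : ℤ[X]) ^ (if l t then 0 else 1) * (X + 1) ^ (if l t then r t else 0) := by
      intro t
      cases l t <;> simp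
    rw [Finset.prod_congr rfl (fun t _ => h2 t), Finset.prod_mul_distrib,
      Finset.prod_pow_eq_pow_sum, Finset.prod_pow_eq_pow_sum]
    congr 2
    have hsum : (∑ t, (if l t then 1 else 0)) + (∑ t, (if l t then 0 else 1)) = s := by
      rw [← Finset.sum_add_distrib]
      have : ∀ t : Fin s, (if l t then 1 else 0) + (if l t then 0 else 1) = 1 := by
        intro t; cases l t <;> simp
      simp [this]
    omega
  -- Step 2: compute the coefficient of X^s on both sides
  have hc := congrArg (fun p : ℤ[X] => p.coeff s) expand
  -- RHS coefficient: alternating sum of binomials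
  rw [Polynomial.finset_sum_coeff] at hc
  have hR : ∀ l : Fin s → Bool,
      ((-1 : ℤ[X]) ^ (s - ∑ t, (if l t then 1 else 0)) *
        (X + 1) ^ (∑ t, if l t then r t else 0)).coeff s
      = (-1 : ℤ) ^ (s - ∑ t, (if l t then 1 else 0)) *
        (Nat.choose (∑ t, if l t then r t else 0) s : ℤ) := by
    intro l
    rw [show ((-1 : ℤ[X]) = C (-1)) by simp, ← map_pow, Polynomial.coeff_C_mul,
      Polynomial.coeff_X_add_one_pow]
  -- LHS coefficient: the product of the r t
  have hL : (∏ t, ((X + 1 : ℤ[X]) ^ (r t) - 1)).coeff s = ∏ t, (r t : ℤ) := by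
    have hfac : ∀ t : Fin s, ((X + 1 : ℤ[X]) ^ (r t) - 1)
        = (∑ j ∈ Finset.range (r t), (X + 1) ^ j) * X := by
      intro t
      have := geom_sum_mul (X + 1 : ℤ[X]) (r t)
      simpa using this.symm
    rw [Finset.prod_congr rfl (fun t _ => hfac t), Finset.prod_mul_distrib]
    simp only [Finset.prod_const, Finset.card_univ, Fintype.card_fin]
    rw [Polynomial.coeff_mul_X_pow', if_pos le_rfl, Nat.sub_self,
      Polynomial.coeff_zero_eq_eval_zero, Polynomial.eval_prod]
    apply Finset.prod_congr rfl
    intro t _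
    simp [Polynomial.eval_finset_sum]
  rw [hL, Finset.sum_congr rfl (fun l _ => hR l)] at hc
  exact hc.symm
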